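/- In the recursive Gaussian variance estimation process with known mean, the diversity vanishes: for every n ≥ 2 and every ε > 0, lim_{T→∞} P(σ̂_T² ≤ ε) = 1. -/

import Mathlib

open MeasureTheory ProbabilityTheory Filter

/-- The chi-squared distribution with `k` degrees of freedom, as the Gamma
distribution with shape `k/2` and rate `1/2`. -/
noncomputable def chiSquared (k : ℝ) : Measure ℝ := gammaMeasure (k / 2) (1 / 2)

lemma measurable_gammaPDF' (a r : ℝ) : Measurable (gammaPDF a r) :=
  (measurable_gammaPDFReal a r).ennreal_ofReal

lemma abs_mul_gammaPDF {a r : ℝ} (ha : 0 < a) (hr : 0 < r) (x : ℝ) :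
    ENNReal.ofReal |x| * gammaPDF a r x = ENNReal.ofReal (a / r) * gammaPDF (a + 1) r x := by
  rcases lt_trichotomy x 0 with hx | rfl | hx
  · rw [gammaPDF_of_neg hx, gammaPDF_of_neg hx, mul_zero, mul_zero]
  · rw [gammaPDF_of_nonneg le_rfl, gammaPDF_of_nonneg le_rfl]
    have h1 : (0:ℝ) ^ (a + 1 - 1) = 0 := by
      rw [add_sub_cancel_right]; exact Real.zero_rpow ha.ne'
    simp [h1, Real.zero_rpow ha.ne']
  · rw [gammaPDF_of_nonneg hx.le, gammaPDF_of_nonneg hx.le, abs_of_pos hx,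
      ← ENNReal.ofReal_mul hx.le, ← ENNReal.ofReal_mul (div_nonneg ha.le hr.le)]
    congr 1
    have hΓ : Real.Gamma (a + 1) = a * Real.Gamma a := Real.Gamma_add_one ha.ne'
    have hΓpos : 0 < Real.Gamma a := Real.Gamma_pos_of_pos ha
    have h1 : x ^ a = x ^ (a - 1) * x := by
      rw [← Real.rpow_add_one hx.ne' (a - 1), sub_add_cancel]
    have h2 : r ^ (a + 1) = r ^ a * r := Real.rpow_add_one hr.ne' a
    rw [add_sub_cancel_right, hΓ, h2, h1]
    field_simp

lemma lintegral_abs_gammaMeasure {a r : ℝ} (ha : 0 < a) (hr : 0 < r) :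
    ∫⁻ x, ENNReal.ofReal |x| ∂(gammaMeasure a r) = ENNReal.ofReal (a / r) := by
  rw [gammaMeasure, lintegral_withDensity_eq_lintegral_mul _ (measurable_gammaPDF' a r)
    (measurable_abs.ennreal_ofReal)]
  have : ∀ x, (gammaPDF a r * fun x => ENNReal.ofReal |x|) x
      = ENNReal.ofReal (a / r) * gammaPDF (a + 1) r x := by
    intro x
    simp only [Pi.mul_apply, mul_comm]
    exact abs_mul_gammaPDF ha hr x
  simp_rw [this]
  rw [lintegral_const_mul _ (measurable_gammaPDF' (a + 1) r),
    lintegral_gammaPDF_eq_one (by linarith) hr, mul_one]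

lemma gammaMeasure_singleton (a r c : ℝ) : gammaMeasure a r {c} = 0 := by
  rw [gammaMeasure, MeasureTheory.withDensity_apply _ (measurableSet_singleton c),
    Measure.restrict_eq_zero.mpr (by simp), lintegral_zero_measure]

/-- In the recursive Gaussian variance estimation process with known mean,
diversity vanishes: for every `n ≥ 2` and every `ε > 0`, `P(σ̂_T² ≤ ε) → 1` as `T → ∞`. -/
theorem stmt_1
    {Ω : Type} [MeasurableSpace Ω] (μ : Measure Ω) [IsProbabilityMeasure μ]
    (n : ℕ) (hn : 2 ≤ n) (σ2 : ℝ) (hσ2 : 0 < σ2)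
    (C : ℕ → Ω → ℝ) (hCmeas : ∀ t, Measurable (C t))
    (hiid : iIndepFun C μ)
    (hlaw : ∀ t, Measure.map (fun ω => (n : ℝ) * C t ω) μ = chiSquared n)
    (sigma2hat : ℕ → Ω → ℝ)
    (h0 : ∀ ω, sigma2hat 0 ω = σ2)
    (hrec : ∀ t ω, sigma2hat (t + 1) ω = sigma2hat t ω * C (t + 1) ω) :
    ∀ ε : ℝ, 0 < ε →
      Tendsto (fun T : ℕ => (μ {ω | sigma2hat T ω ≤ ε}).toReal) atTop (nhds 1) := by
  intro ε hε
  have hn0 : (0:ℝ) < (n:ℝ) := by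
    have : 0 < n := lt_of_lt_of_le (by norm_num) hn
    exact_mod_cast this
  set ν : Measure ℝ := chiSquared n with hν
  have hνprob : IsProbabilityMeasure ν :=
    isProbabilityMeasure_gammaMeasure (by positivity) (by norm_num)
  have msqrt : Measurable Real.sqrt := Real.continuous_sqrt.measurable
  -- the function x ↦ ofReal √(|x|/n)
  set f : ℝ → ENNReal := fun x => ENNReal.ofReal (Real.sqrt (|x| / n)) with hf
  have hfmeas : Measurable f :=
    (msqrt.comp (measurable_abs.div_const _)).ennreal_ofReal
  set ρ : ENNReal := ∫⁻ x, f x ∂ν with hρdef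
  -- dominating function
  set g : ℝ → ENNReal := fun x =>
    ENNReal.ofReal (1/2) + ENNReal.ofReal |x| * ENNReal.ofReal (1/(2*n)) with hg
  have hfg : ∀ x, |x| ≠ (n:ℝ) → f x < g x := by
    intro x hx
    have hy0 : 0 ≤ |x| / n := by positivity
    have hy1 : |x| / n ≠ 1 := by
      intro h
      apply hx
      field_simp at h
      linarith
    have hs1 : Real.sqrt (|x| / n) ≠ 1 := fun h => hy1 (Real.sqrt_eq_one.mp h)
    have hsq : Real.sqrt (|x| / n) ^ 2 = |x| / n := Real.sq_sqrt hy0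
    have hpos : (0:ℝ) < (Real.sqrt (|x| / n) - 1) ^ 2 :=
      lt_of_le_of_ne (sq_nonneg _) (Ne.symm (pow_ne_zero 2 (sub_ne_zero.mpr hs1)))
    have hlt : Real.sqrt (|x| / n) < 1/2 + |x| * (1/(2*n)) := by
      have h2 : |x| * (1/(2*n)) = (|x| / n) / 2 := by
        rw [mul_one_div, div_div, mul_comm]
      nlinarith [hsq]
    calc f x < ENNReal.ofReal (1/2 + |x| * (1/(2*n))) := by
          exact ENNReal.ofReal_lt_ofReal_iff (by positivity) |>.mpr hlt
      _ = g x := by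
          rw [hg, ENNReal.ofReal_add (by norm_num) (by positivity),
            ENNReal.ofReal_mul (abs_nonneg x)]
  have hfg_le : ∀ x, f x ≤ g x := by
    intro x
    have hy0 : 0 ≤ |x| / n := by positivity
    have hsq : Real.sqrt (|x| / n) ^ 2 = |x| / n := Real.sq_sqrt hy0
    have hle : Real.sqrt (|x| / n) ≤ 1/2 + |x| * (1/(2*n)) := by
      have h2 : |x| * (1/(2*n)) = (|x| / n) / 2 := by
        rw [mul_one_div, div_div, mul_comm]
      nlinarith [sq_nonneg (Real.sqrt (|x| / n) - 1)]
    calc f x ≤ ENNReal.ofReal (1/2 + |x| * (1/(2*n))) := ENNReal.ofReal_le_ofReal hle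
      _ = g x := by
          rw [hg, ENNReal.ofReal_add (by norm_num) (by positivity),
            ENNReal.ofReal_mul (abs_nonneg x)]
  -- mean of ν
  have hmean : ∫⁻ x, ENNReal.ofReal |x| ∂ν = ENNReal.ofReal n := by
    rw [hν, chiSquared, lintegral_abs_gammaMeasure (by positivity) (by norm_num)]
    congr 1
    field_simp
  have hgint : ∫⁻ x, g x ∂ν = 1 := by
    rw [hg]
    rw [lintegral_add_left measurable_const,
      lintegral_mul_const _ measurable_abs.ennreal_ofReal, hmean, lintegral_const,
      measure_univ, mul_one, ← ENNReal.ofReal_mul hn0.le]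
    have : (n:ℝ) * (1/(2*n)) = 1/2 := by
      field_simp
    rw [this, ← ENNReal.ofReal_add (by norm_num) (by norm_num)]
    norm_num
  -- strict bound ρ < 1
  have hρlt : ρ < 1 := by
    have hν0 : ν ≠ 0 := hνprob.ne_zero _
    have hae : ∀ᵐ x ∂ν, f x < g x := by
      have hnull : ν {x : ℝ | ¬ |x| ≠ (n:ℝ)} = 0 := by
        have hsub : {x : ℝ | ¬ |x| ≠ (n:ℝ)} ⊆ {(n:ℝ)} ∪ {-(n:ℝ)} := by
          intro x hx
          simp only [Set.mem_setOf_eq, not_not] at hx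
          rcases abs_eq hn0.le |>.mp hx with h | h
          · exact Or.inl h
          · exact Or.inr h
        refine measure_mono_null hsub ?_
        refine le_antisymm (le_trans (measure_union_le _ _) ?_) zero_le
        rw [hν, chiSquared, gammaMeasure_singleton, gammaMeasure_singleton, add_zero]
      filter_upwards [measure_eq_zero_iff_ae_notMem.mp hnull] with x hx
      exact hfg x (by simpa using hx)
    have hfi : ∫⁻ x, f x ∂ν ≠ ⊤ := by
      refine ne_top_of_le_ne_top ?_ (lintegral_mono hfg_le)
      rw [hgint]; exact ENNReal.one_ne_top
    calc ρ < ∫⁻ x, g x ∂ν :=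
        lintegral_strict_mono hν0 ((measurable_const.add
          (measurable_abs.ennreal_ofReal.mul_const _)).aemeasurable) hfi hae
      _ = 1 := hgint
  -- the ENNReal-valued factors
  set G : ℕ → Ω → ENNReal := fun t ω => ENNReal.ofReal (Real.sqrt |C t ω|) with hG
  have hGmeas : ∀ t, Measurable (G t) :=
    fun t => (msqrt.comp (hCmeas t).abs).ennreal_ofReal
  have hGindep : iIndepFun G μ :=
    hiid.comp (fun _ x => ENNReal.ofReal (Real.sqrt |x|))
      (fun _ => (msqrt.comp measurable_abs).ennreal_ofReal)
  have hGint : ∀ t, ∫⁻ ω, G t ω ∂μ = ρ := by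
    intro t
    have habs : ∀ c : ℝ, |(n:ℝ) * c| / n = |c| := by
      intro c; rw [abs_mul, abs_of_pos hn0]; field_simp
    have : ∀ ω, G t ω = f ((n:ℝ) * C t ω) := by
      intro ω; rw [hf]; simp only [hG]; rw [habs]
    simp_rw [this]
    rw [← lintegral_map hfmeas ((hCmeas t).const_mul _), hlaw t]
  -- expected value of partial products
  have key : ∀ T, ∫⁻ ω, ∏ i ∈ Finset.range T, G (i+1) ω ∂μ = ρ ^ T := by
    intro T
    induction T with
    | zero => simp
    | succ T ih =>
      have hinj : ∀ x ∈ Finset.range T, ∀ y ∈ Finset.range T,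
          x + 1 = y + 1 → x = y := by omega
      have heq : (∏ j ∈ (Finset.range T).image (· + 1), G j)
          = fun ω => ∏ i ∈ Finset.range T, G (i+1) ω := by
        funext ω
        rw [Finset.prod_apply, Finset.prod_image hinj]
      have hnotmem : T + 1 ∉ (Finset.range T).image (· + 1) := by
        simp only [Finset.mem_image, Finset.mem_range]
        rintro ⟨x, hx, hx1⟩; omega
      have hindep : IndepFun (∏ j ∈ (Finset.range T).image (· + 1), G j) (G (T+1)) μ :=
        hGindep.indepFun_finset_prod_of_notMem hGmeas hnotmem
      have hmeasprod : Measurable (∏ j ∈ (Finset.range T).image (· + 1), G j) := by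
        rw [heq]
        exact Finset.measurable_prod _ (fun i _ => hGmeas (i+1))
      calc ∫⁻ ω, ∏ i ∈ Finset.range (T+1), G (i+1) ω ∂μ
          = ∫⁻ ω, ((∏ j ∈ (Finset.range T).image (· + 1), G j) * G (T+1)) ω ∂μ := by
            refine lintegral_congr fun ω => ?_
            rw [Pi.mul_apply, heq, Finset.prod_range_succ]
        _ = (∫⁻ ω, (∏ j ∈ (Finset.range T).image (· + 1), G j) ω ∂μ)
              * ∫⁻ ω, G (T+1) ω ∂μ :=
            lintegral_mul_eq_lintegral_mul_lintegral_of_indepFun hmeasprod (hGmeas _) hindep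
        _ = ρ ^ T * ρ := by rw [heq, ih, hGint]
        _ = ρ ^ (T+1) := (pow_succ ρ T).symm
  -- pointwise product formula
  have hmeas_sig : ∀ T, Measurable (sigma2hat T) := by
    intro T
    induction T with
    | zero =>
      have : sigma2hat 0 = fun _ => σ2 := funext h0
      rw [this]; exact measurable_const
    | succ T ih =>
      have : sigma2hat (T+1) = fun ω => sigma2hat T ω * C (T+1) ω := funext (hrec T)
      rw [this]; exact ih.mul (hCmeas (T+1))
  have hFT : ∀ T ω, ENNReal.ofReal (Real.sqrt |sigma2hat T ω|)
      = ENNReal.ofReal (Real.sqrt σ2) * ∏ i ∈ Finset.range T, G (i+1) ω := by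
    intro T
    induction T with
    | zero => intro ω; simp [h0 ω, abs_of_pos hσ2]
    | succ T ih =>
      intro ω
      rw [hrec T ω, abs_mul, Real.sqrt_mul (abs_nonneg _),
        ENNReal.ofReal_mul (Real.sqrt_nonneg _), ih ω, Finset.prod_range_succ, mul_assoc]
  -- Markov bound
  set c : ENNReal := ENNReal.ofReal (Real.sqrt σ2) / ENNReal.ofReal (Real.sqrt ε) with hc
  have hεne : ENNReal.ofReal (Real.sqrt ε) ≠ 0 :=
    (ENNReal.ofReal_pos.mpr (Real.sqrt_pos.mpr hε)).ne'
  have hmark : ∀ T, μ {ω | ¬ sigma2hat T ω ≤ ε} ≤ c * ρ ^ T := by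
    intro T
    have hsub : {ω | ¬ sigma2hat T ω ≤ ε}
        ⊆ {ω | ENNReal.ofReal (Real.sqrt ε)
            ≤ ENNReal.ofReal (Real.sqrt |sigma2hat T ω|)} := by
      intro ω hω
      simp only [Set.mem_setOf_eq, not_le] at hω ⊢
      exact ENNReal.ofReal_le_ofReal (Real.sqrt_le_sqrt
        (le_trans hω.le (le_abs_self _)))
    have haemeas : AEMeasurable (fun ω => ENNReal.ofReal (Real.sqrt |sigma2hat T ω|)) μ :=
      ((msqrt.comp (hmeas_sig T).abs).ennreal_ofReal).aemeasurable
    calc μ {ω | ¬ sigma2hat T ω ≤ ε}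
        ≤ μ {ω | ENNReal.ofReal (Real.sqrt ε)
            ≤ ENNReal.ofReal (Real.sqrt |sigma2hat T ω|)} := measure_mono hsub
      _ ≤ (∫⁻ ω, ENNReal.ofReal (Real.sqrt |sigma2hat T ω|) ∂μ)
            / ENNReal.ofReal (Real.sqrt ε) :=
          meas_ge_le_lintegral_div haemeas hεne ENNReal.ofReal_ne_top
      _ = c * ρ ^ T := by
          have hint : ∫⁻ ω, ENNReal.ofReal (Real.sqrt |sigma2hat T ω|) ∂μ
              = ENNReal.ofReal (Real.sqrt σ2) * ρ ^ T := by
            simp_rw [hFT T]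
            rw [lintegral_const_mul _ (Finset.measurable_prod (Finset.range T)
              (fun i _ => hGmeas (i+1))), key T]
          rw [hint, hc, div_eq_mul_inv, div_eq_mul_inv, mul_right_comm]
  have hcne : c ≠ ⊤ := (ENNReal.div_lt_top ENNReal.ofReal_ne_top hεne).ne
  have hb : Tendsto (fun T : ℕ => c * ρ ^ T) atTop (nhds 0) := by
    have h1 := ENNReal.Tendsto.const_mul (a := c)
      (ENNReal.tendsto_pow_atTop_nhds_zero_of_lt_one hρlt) (Or.inr hcne)
    simpa using h1
  have hμ0 : Tendsto (fun T => μ {ω | ¬ sigma2hat T ω ≤ ε}) atTop (nhds 0) :=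
    tendsto_of_tendsto_of_tendsto_of_le_of_le tendsto_const_nhds hb
      (fun T => zero_le) hmark
  have hμ0' : Tendsto (fun T => (μ {ω | ¬ sigma2hat T ω ≤ ε}).toReal) atTop (nhds 0) := by
    have h2 := (ENNReal.tendsto_toReal (a := 0) (by simp)).comp hμ0
    simpa [Function.comp_def] using h2
  have hcompl : ∀ T : ℕ, (μ {ω | sigma2hat T ω ≤ ε}).toReal
      = 1 - (μ {ω | ¬ sigma2hat T ω ≤ ε}).toReal := by
    intro T
    have hs : MeasurableSet {ω | sigma2hat T ω ≤ ε} :=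
      measurableSet_le (hmeas_sig T) measurable_const
    have h1 : μ {ω | sigma2hat T ω ≤ ε}ᶜ = 1 - μ {ω | sigma2hat T ω ≤ ε} := by
      rw [measure_compl hs (measure_ne_top μ _), measure_univ]
    have h2 : {ω | sigma2hat T ω ≤ ε}ᶜ = {ω | ¬ sigma2hat T ω ≤ ε} :=
      Set.compl_setOf _
    have h3 : (μ {ω | ¬ sigma2hat T ω ≤ ε}).toReal
        = 1 - (μ {ω | sigma2hat T ω ≤ ε}).toReal := by
      rw [← h2, h1, ENNReal.toReal_sub_of_le prob_le_one ENNReal.one_ne_top,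
        ENNReal.toReal_one]
    rw [h3]; ring
  simp_rw [hcompl]
  have hfin := (tendsto_const_nhds (x := (1:ℝ)) (f := atTop (α := ℕ))).sub hμ0'
  simpa using hfin
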